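/- The Final Rule is sound: if a team X satisfies the inclusion atom a⃗c⃗ ⊆ a⃗x⃗, the independence atom b⃗ ⊥_{a⃗} x⃗, and the inclusion atom a⃗b⃗x⃗ ⊆ a⃗b⃗c⃗, then X satisfies the independence atom b⃗ ⊥_{a⃗} c⃗. -/
import Mathlib


/-- A team is a set of assignments; the inclusion atom `x ⊆ y` holds in team `X`
iff for every `s ∈ X` there is `s' ∈ X` with `s(x) = s'(y)` componentwise. -/
def InclAtom {M Var : Type*} {n : ℕ} (X : Set (Var → M)) (x y : Fin n → Var) : Prop :=
  ∀ s ∈ X, ∃ s' ∈ X, ∀ i, s (x i) = s' (y i)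

/-- The conditional independence atom `y ⊥_x z` holds in team `X` iff for all
`s, s' ∈ X` agreeing on `x` there is `s'' ∈ X` with `s''(x) = s(x)`,
`s''(y) = s(y)` and `s''(z) = s'(z)`. -/
def IndepAtom {M Var : Type*} {k m n : ℕ} (X : Set (Var → M)) (x : Fin k → Var)
    (y : Fin m → Var) (z : Fin n → Var) : Prop :=
  ∀ s ∈ X, ∀ s' ∈ X, (∀ i, s (x i) = s' (x i)) →
    ∃ s'' ∈ X, (∀ i, s'' (x i) = s (x i)) ∧ (∀ i, s'' (y i) = s (y i)) ∧
      (∀ i, s'' (z i) = s' (z i))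

/-- The Final Rule is sound: from a⃗c⃗ ⊆ a⃗x⃗, b⃗ ⊥_{a⃗} x⃗ and
a⃗b⃗x⃗ ⊆ a⃗b⃗c⃗ one obtains b⃗ ⊥_{a⃗} c⃗. -/
theorem final_rule {M Var : Type*} {k m n : ℕ} (X : Set (Var → M))
    (a : Fin k → Var) (b : Fin m → Var) (c x : Fin n → Var)
    (h1 : InclAtom X (Fin.append a c) (Fin.append a x))
    (h2 : IndepAtom X a b x)
    (h3 : InclAtom X (Fin.append (Fin.append a b) x) (Fin.append (Fin.append a b) c)) :
    IndepAtom X a b c := by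
  intro s hs s' hs' hagree
  -- From h1 applied to s': get t with t(a) = s'(a), t(x) = s'(c)
  obtain ⟨t, ht, htdef⟩ := h1 s' hs'
  have hta : ∀ i, t (a i) = s' (a i) := fun i => by
    have := htdef (Fin.castAdd n i)
    simpa [Fin.append_left] using this.symm
  have htx : ∀ i, t (x i) = s' (c i) := fun i => by
    have := htdef (Fin.natAdd k i)
    simpa [Fin.append_right] using this.symm
  -- Apply h2 to s and t
  obtain ⟨u, hu, hua, hub, hux⟩ := h2 s hs t ht (fun i => by rw [hagree i, hta i])
  -- Apply h3 to u
  obtain ⟨v, hv, hvdef⟩ := h3 u hu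
  refine ⟨v, hv, fun i => ?_, fun i => ?_, fun i => ?_⟩
  · have := hvdef (Fin.castAdd n (Fin.castAdd m i))
    simp only [Fin.append_left] at this
    rw [← this, hua i]
  · have := hvdef (Fin.castAdd n (Fin.natAdd k i))
    simp only [Fin.append_left, Fin.append_right] at this
    rw [← this, hub i]
  · have := hvdef (Fin.natAdd (k + m) i)
    simp only [Fin.append_right] at this
    rw [← this, hux i, htx i]
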